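/- arXiv:1304.6586 — 2 statements merged into one kernel-verified Lean document; each statement's English description precedes it below -/
import Mathlib

section
/- Let F be a field and K a subfield of F. Let f, h be formal power series over F. Suppose there exists n0 such that the coefficient of q^n in f is zero for all n < n0 and the coefficient of q^{n0} in f is nonzero. If every coefficient of f lies in K and every coefficient of the product f·h lies in K, then every coefficient of h lies in K. -/
/-- If `K` is a subfield of a field `F`, `f, h ∈ F[[q]]`, `f` has some nonzero coefficient
(first nonzero at index `n0`), all coefficients of `f` lie in `K`, and all coefficients of
`f * h` lie in `K`, then all coefficients of `h` lie in `K`. -/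
theorem stmt1 {F : Type*} [Field F] (K : Subfield F) (f h : PowerSeries F) (n0 : ℕ)
    (hf0 : ∀ n < n0, PowerSeries.coeff (R := F) n f = 0)
    (hfn0 : PowerSeries.coeff (R := F) n0 f ≠ 0)
    (hfK : ∀ n, PowerSeries.coeff (R := F) n f ∈ K)
    (hprod : ∀ n, PowerSeries.coeff (R := F) n (f * h) ∈ K) :
    ∀ n, PowerSeries.coeff (R := F) n h ∈ K := by
  intro n
  induction n using Nat.strong_induction_on with
  | _ n ih =>
    have key : PowerSeries.coeff (R := F) (n0 + n) (f * h) =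
        (∑ k ∈ Finset.range n,
          PowerSeries.coeff (R := F) (n0 + k + 1) f * PowerSeries.coeff (R := F) (n - (k + 1)) h) +
        PowerSeries.coeff (R := F) n0 f * PowerSeries.coeff (R := F) n h := by
      rw [PowerSeries.coeff_mul,
        Finset.Nat.sum_antidiagonal_eq_sum_range_succ
          (fun i j => PowerSeries.coeff (R := F) i f * PowerSeries.coeff (R := F) j h)]
      have hsplit : Finset.range (n0 + n + 1) =
          Finset.range n0 ∪ Finset.Ico n0 (n0 + n + 1) := by
        rw [Finset.range_eq_Ico, Finset.range_eq_Ico, Finset.Ico_union_Ico_eq_Ico (Nat.zero_le _) (by omega)]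
      rw [hsplit, Finset.sum_union (by
        simp [Finset.disjoint_left, Finset.mem_Ico] ; omega)]
      have h1 : ∑ k ∈ Finset.range n0,
          PowerSeries.coeff (R := F) k f * PowerSeries.coeff (R := F) (n0 + n - k) h = 0 := by
        apply Finset.sum_eq_zero
        intro k hk
        rw [hf0 k (Finset.mem_range.mp hk), zero_mul]
      rw [h1, zero_add, Finset.sum_Ico_eq_sum_range]
      have h2 : n0 + n + 1 - n0 = n + 1 := by omega
      rw [h2, Finset.sum_range_succ']
      congr 1
      · apply Finset.sum_congr rfl
        intro k hk
        have e1 : n0 + (k + 1) = n0 + k + 1 := by omega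
        have e2 : n0 + n - (n0 + k + 1) = n - (k + 1) := by omega
        rw [e1, e2]
      · simp
    have hn : PowerSeries.coeff (R := F) n h =
        (PowerSeries.coeff (R := F) (n0 + n) (f * h) -
          ∑ k ∈ Finset.range n,
            PowerSeries.coeff (R := F) (n0 + k + 1) f * PowerSeries.coeff (R := F) (n - (k + 1)) h) /
          PowerSeries.coeff (R := F) n0 f := by
      rw [eq_div_iff hfn0]
      linear_combination -key
    rw [hn]
    apply K.div_mem
    · apply K.sub_mem (hprod _)
      apply sum_mem
      intro k hk
      have hkn := Finset.mem_range.mp hk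
      exact K.mul_mem (hfK _) (ih _ (by omega))
    · exact hfK n0
end

section
/- Let B and r be positive integers, let K₀ be a subfield of ℂ that is a finite extension of ℚ, and let f_1, …, f_r : ℕ → ℂ be linearly independent functions all of whose values lie in K₀. Suppose that for all α_1, …, α_r ∈ ℂ, if Σ_{i=1}^r α_i f_i(n) = 0 for every n with 1 ≤ n ≤ B, then Σ_{i=1}^r α_i f_i is the zero function. Let λ_1, …, λ_r ∈ ℂ and set f = Σ_{i=1}^r λ_i f_i. If f(n) is algebraic over ℚ for every n with 1 ≤ n ≤ B, then each λ_i is algebraic over ℚ, f(n) is algebraic over ℚ for every n ∈ ℕ, and there exists a subfield K_f of ℂ that is a finite extension of ℚ with f(n) ∈ K_f for all n ∈ ℕ. -/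
set_option synthInstance.maxHeartbeats 1000000
set_option maxHeartbeats 1600000


lemma stmt6_mem_isAlgebraic (K : Subfield ℂ) (hK : FiniteDimensional ℚ K)
    {x : ℂ} (hx : x ∈ K) : IsAlgebraic ℚ x := by
  have h1 : IsIntegral ℚ (⟨x, hx⟩ : K) := IsIntegral.of_finite ℚ _
  have h2 := h1.map (K.subtype.toRatAlgHom)
  exact h2.isAlgebraic

lemma stmt6_fd_toSubfield (T : IntermediateField ℚ ℂ) [FiniteDimensional ℚ T] :
    FiniteDimensional ℚ T.toSubfield := by
  let L : T →ₗ[ℚ] T.toSubfield :=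
    { toFun := fun x => ⟨x.1, x.2⟩
      map_add' := fun x y => rfl
      map_smul' := fun q x => by
        apply Subtype.ext
        show (↑(q • x) : ℂ) = ((q • (⟨x.1, x.2⟩ : T.toSubfield) : T.toSubfield) : ℂ)
        push_cast
        ring }
  exact Module.Finite.of_surjective L (fun y => ⟨⟨y.1, y.2⟩, rfl⟩)

/-- Linear-algebra core of the main theorem: if `f_1, …, f_r : ℕ → ℂ` are linearly
independent, take values in a number field `K₀`, and satisfy the Sturm-type property that
any linear combination vanishing on `1 ≤ n ≤ B` is zero, then for `f = ∑ λ_i f_i` with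
`f(n)` algebraic for `1 ≤ n ≤ B`, the `λ_i` are algebraic, all `f(n)` are algebraic, and
there is a number field `K_f ⊆ ℂ` containing all `f(n)`. -/
theorem stmt6 (B r : ℕ) (hB : 0 < B) (hr : 0 < r)
    (K₀ : Subfield ℂ) (hK₀ : FiniteDimensional ℚ K₀)
    (f : Fin r → ℕ → ℂ) (hval : ∀ i n, f i n ∈ K₀)
    (hind : LinearIndependent ℂ f)
    (hSturm : ∀ α : Fin r → ℂ,
      (∀ n : ℕ, 1 ≤ n → n ≤ B → ∑ i, α i * f i n = 0) →
      (fun n : ℕ => ∑ i, α i * f i n) = 0)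
    (lam : Fin r → ℂ) (F : ℕ → ℂ) (hF : ∀ n, F n = ∑ i, lam i * f i n)
    (halg : ∀ n : ℕ, 1 ≤ n → n ≤ B → IsAlgebraic ℚ (F n)) :
    (∀ i, IsAlgebraic ℚ (lam i)) ∧ (∀ n : ℕ, IsAlgebraic ℚ (F n)) ∧
      ∃ Kf : Subfield ℂ, FiniteDimensional ℚ Kf ∧ ∀ n : ℕ, F n ∈ Kf := by
  classical
  -- the truncated vectors over K₀
  set v : Fin r → (Fin B → K₀) := fun i n => ⟨f i (n.val + 1), hval i _⟩ with hv
  -- complex linear independence of the truncated vectors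
  have hvC : ∀ α : Fin r → ℂ, (∀ n : Fin B, ∑ i, α i * f i (n.val + 1) = 0) →
      ∀ i, α i = 0 := by
    intro α h
    have h0 : (fun n : ℕ => ∑ i, α i * f i n) = 0 := by
      apply hSturm
      intro n h1 h2
      have hlt : n - 1 < B := by omega
      have := h ⟨n - 1, hlt⟩
      simpa [Nat.sub_add_cancel h1] using this
    have hsum : ∑ i, α i • f i = 0 := by
      funext n
      have := congrFun h0 n
      simpa [Finset.sum_apply] using this
    exact Fintype.linearIndependent_iff.mp hind α hsum
  -- K₀-linear independence of v
  have hvK : LinearIndependent K₀ v := by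
    rw [Fintype.linearIndependent_iff]
    intro g hg i
    have hn : ∀ n : Fin B, ∑ j, ((g j : ℂ)) * f j (n.val + 1) = 0 := by
      intro n
      have := congrFun hg n
      have : ∑ j, g j * v j n = 0 := by simpa [Finset.sum_apply, smul_eq_mul] using this
      calc ∑ j, ((g j : ℂ)) * f j (n.val + 1) = ((∑ j, g j * v j n : K₀) : ℂ) := by
            push_cast [hv]; rfl
        _ = 0 := by rw [this]; simp
    exact_mod_cast hvC (fun j => (g j : ℂ)) hn i
  -- the linear-combination map and its left inverse
  let T : (Fin r → K₀) →ₗ[K₀] (Fin B → K₀) := Fintype.linearCombination K₀ v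
  have hT : LinearMap.ker T = ⊥ := by
    rw [LinearMap.ker_eq_bot']
    intro c hc
    funext j
    exact Fintype.linearIndependent_iff.mp hvK c (by simpa [T, Fintype.linearCombination_apply] using hc) j
  obtain ⟨g, hg⟩ := T.exists_leftInverse_of_injective hT
  let ψ : Fin r → ((Fin B → K₀) →ₗ[K₀] K₀) := fun i => (LinearMap.proj i).comp g
  have hψ : ∀ i j, ψ i (v j) = if i = j then 1 else 0 := by
    intro i j
    have hvj : T (Pi.single j 1) = v j := by
      simp [T, Fintype.linearCombination_apply, Pi.single_apply]
    have := congrFun (congrArg (fun (h : (Fin r → K₀) →ₗ[K₀] (Fin r → K₀)) => h (Pi.single j (1:K₀))) hg) i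
    simp only [LinearMap.comp_apply, LinearMap.id_apply] at this
    rw [hvj] at this
    simpa [ψ, Pi.single_apply] using this
  -- expansion of ψ as a dot product
  have hexp : ∀ i (x : Fin B → K₀), ψ i x = ∑ n, x n * ψ i (Pi.single n 1) := by
    intro i x
    have hx : x = ∑ n, x n • (Pi.single n (1 : K₀) : Fin B → K₀) := by
      funext m
      simp [Finset.sum_apply, Pi.single_apply]
    conv_lhs => rw [hx]
    simp [map_sum, smul_eq_mul]
  set a : Fin r → Fin B → K₀ := fun i n => ψ i (Pi.single n 1) with ha
  -- key identity: the coefficients are dot products of a with F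
  have hkey : ∀ i, lam i = ∑ n : Fin B, (a i n : ℂ) * F (n.val + 1) := by
    intro i
    have step1 : ∀ n : Fin B, (∑ j, lam j * f j (n.val + 1)) = F (n.val + 1) := fun n => (hF _).symm
    calc lam i = ∑ j, lam j * (if i = j then 1 else 0) := by
            rw [Finset.sum_congr rfl (fun j _ => by rw [mul_ite, mul_one, mul_zero] : ∀ j ∈ Finset.univ, lam j * (if i = j then 1 else 0) = if i = j then lam j else 0)]
            simp
      _ = ∑ j, lam j * ((ψ i (v j) : K₀) : ℂ) := by
            refine Finset.sum_congr rfl fun j _ => ?_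
            rw [hψ i j]
            simp [apply_ite (fun x : K₀ => (x : ℂ))]
      _ = ∑ j, lam j * (∑ n : Fin B, (v j n : ℂ) * (a i n : ℂ)) := by
            refine Finset.sum_congr rfl fun j _ => ?_
            rw [hexp i (v j)]
            push_cast
            rfl
      _ = ∑ n : Fin B, (a i n : ℂ) * ∑ j, lam j * f j (n.val + 1) := by
            simp_rw [Finset.mul_sum]
            rw [Finset.sum_comm]
            refine Finset.sum_congr rfl fun n _ => Finset.sum_congr rfl fun j _ => ?_
            show lam j * ((v j n : ℂ) * (a i n : ℂ)) = (a i n : ℂ) * (lam j * f j (n.val + 1))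
            have hvv : ((v j n : K₀) : ℂ) = f j (n.val + 1) := rfl
            rw [hvv]; ring
      _ = ∑ n : Fin B, (a i n : ℂ) * F (n.val + 1) := by
            exact Finset.sum_congr rfl fun n _ => by rw [step1 n]
  -- the coefficients are algebraic
  have hlam : ∀ i, IsAlgebraic ℚ (lam i) := by
    intro i
    rw [hkey i]
    have : (∑ n : Fin B, (a i n : ℂ) * F (n.val + 1)) ∈ integralClosure ℚ ℂ := by
      refine Subalgebra.sum_mem _ fun n _ => Subalgebra.mul_mem _ ?_ ?_
      · exact (isAlgebraic_iff_isIntegral.mp (stmt6_mem_isAlgebraic K₀ hK₀ (a i n).2))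
      · exact isAlgebraic_iff_isIntegral.mp (halg _ (by omega) (by omega))
    exact this.isAlgebraic
  -- build the number field Kf
  let m := Module.finrank ℚ K₀
  let b : Module.Basis (Fin m) ℚ K₀ := Module.finBasis ℚ K₀
  let S : Set ℂ := (Set.range fun k : Fin m => (b k : ℂ)) ∪ Set.range lam
  have hSfin : S.Finite := (Set.finite_range _).union (Set.finite_range _)
  haveI := hSfin.to_subtype
  have hSint : ∀ x ∈ S, IsIntegral ℚ x := by
    intro x hx
    rcases hx with ⟨k, rfl⟩ | ⟨j, rfl⟩
    · exact isAlgebraic_iff_isIntegral.mp (stmt6_mem_isAlgebraic K₀ hK₀ (b k).2)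
    · exact isAlgebraic_iff_isIntegral.mp (hlam j)
  let T' : IntermediateField ℚ ℂ := IntermediateField.adjoin ℚ S
  haveI : FiniteDimensional ℚ T' := IntermediateField.finiteDimensional_adjoin hSint
  have hfd : FiniteDimensional ℚ T'.toSubfield := stmt6_fd_toSubfield T'
  have hK₀sub : ∀ x : ℂ, x ∈ K₀ → x ∈ T' := by
    intro x hx
    have hrepr := b.sum_repr ⟨x, hx⟩
    have h2 : ∑ k, ((b.repr ⟨x, hx⟩ k : ℂ)) * ((b k : K₀) : ℂ) = x := by
      have h3 := congrArg (fun z : K₀ => (z : ℂ)) hrepr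
      push_cast [Rat.smul_def] at h3
      exact h3
    rw [← h2]
    refine Subfield.sum_mem _ fun k _ => Subfield.mul_mem _ ?_ ?_
    · have : ((b.repr ⟨x, hx⟩ k : ℂ)) = algebraMap ℚ ℂ (b.repr ⟨x, hx⟩ k) := by
        simp [eq_ratCast]
      rw [this]
      exact T'.algebraMap_mem _
    · exact IntermediateField.subset_adjoin ℚ S (Or.inl ⟨k, rfl⟩)
  have hmem : ∀ n : ℕ, F n ∈ T'.toSubfield := by
    intro n
    rw [hF n]
    refine Subfield.sum_mem _ fun j _ => Subfield.mul_mem _ ?_ ?_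
    · exact IntermediateField.subset_adjoin ℚ S (Or.inr ⟨j, rfl⟩)
    · exact hK₀sub _ (hval j n)
  exact ⟨hlam, fun n => stmt6_mem_isAlgebraic _ hfd (hmem n), T'.toSubfield, hfd, hmem⟩
end
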